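/- Let v ∈ ℝ^n solve min_{v ∈ V} (max_i ∇F_i(x)·v + (1/2)‖v‖²) over a linear subspace V ⊆ ℝ^n. Then v = -∑_{i ∈ I(x,v)} λ_i P_V(∇F_i(x)) for some λ_i ≥ 0 with ∑ λ_i = 1, where I(x,v) = {i : ∇F_i(x)·v = max_j ∇F_j(x)·v} and P_V is the orthogonal projection onto V. -/

import Mathlib

open RealInnerProductSpace Finset

section Aux

variable {E : Type*} [NormedAddCommGroup E] [InnerProductSpace ℝ E]

/-- Inner product with the gradient computes the derivative. -/
lemma aux_inner_gradient [CompleteSpace E] (f : E → ℝ) (x w : E) :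
    ⟪gradient f x, w⟫ = fderiv ℝ f x w := by
  show ⟪(InnerProductSpace.toDual ℝ E).symm (fderiv ℝ f x), w⟫ = fderiv ℝ f x w
  rw [InnerProductSpace.toDual_symm_apply]

/-- Abstract version: the minimizer of `w ↦ max_i ⟪g i, w⟫ + ½‖w‖²` over a subspace `V`
is the negative of a convex combination of the projections of the `g i` for active `i`. -/
lemma aux_minimizer_neg_convex_comb [CompleteSpace E] {m : ℕ} [NeZero m]
    (g : Fin m → E) (V : Submodule ℝ E) [V.HasOrthogonalProjection]
    (v : E) (hvV : v ∈ V)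
    (hmin : IsMinOn (fun w => (⨆ i, ⟪g i, w⟫) + (1 / 2) * ‖w‖ ^ 2) (V : Set E) v) :
    ∃ lam : Fin m → ℝ, (∀ i, 0 ≤ lam i) ∧ (∑ i, lam i = 1) ∧
      (∀ i, ⟪g i, v⟫ ≠ (⨆ j, ⟪g j, v⟫) → lam i = 0) ∧
      v = -∑ i, lam i • (V.orthogonalProjectionOnto (g i) : E) := by
  classical
  set G : Fin m → E := fun i => (V.orthogonalProjectionOnto (g i) : E) with hG
  set φ : Fin m → E → ℝ := fun i w => ⟪g i, w⟫ with hφ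
  have hφadd : ∀ i (w₁ w₂ : E), φ i (w₁ + w₂) = φ i w₁ + φ i w₂ := by
    intro i w₁ w₂; simp [hφ, inner_add_right]
  have hφsmul : ∀ i (c : ℝ) (w : E), φ i (c • w) = c * φ i w := by
    intro i c w; simp [hφ, real_inner_smul_right]
  have hGV : ∀ i, G i ∈ V := fun i => (V.orthogonalProjectionOnto (g i)).2
  have hproj : ∀ i, ∀ w ∈ V, ⟪G i, w⟫ = φ i w := by
    intro i w hw
    have h : ⟪g i - (V.orthogonalProjectionOnto (g i) : E), w⟫ = 0 :=
      V.starProjection_inner_eq_zero (g i) w hw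
    rw [inner_sub_left, sub_eq_zero] at h
    exact h.symm
  have hproj2 : ∀ (y : E), ∀ u ∈ V, ⟪u, (V.orthogonalProjectionOnto y : E)⟫ = ⟪u, y⟫ := by
    intro y u hu
    have h : ⟪y - (V.orthogonalProjectionOnto y : E), u⟫ = 0 :=
      V.starProjection_inner_eq_zero y u hu
    rw [inner_sub_left, sub_eq_zero] at h
    exact (real_inner_comm _ _).trans (h.symm.trans (real_inner_comm _ _))
  set M : ℝ := ⨆ j, φ j v with hM
  have hbdd : ∀ w : E, BddAbove (Set.range fun i => φ i w) := fun w =>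
    Set.Finite.bddAbove (Set.finite_range _)
  have hle : ∀ i (w : E), φ i w ≤ ⨆ j, φ j w := fun i w => le_ciSup (hbdd w) i
  set T : Finset (Fin m) := univ.filter (fun i => φ i v = M) with hT
  have hTne : T.Nonempty := by
    obtain ⟨i, hi⟩ := exists_eq_ciSup_of_finite (f := fun j => φ j v)
    exact ⟨i, by simp [hT, hi, hM]⟩
  -- Key optimality claim
  have claimA : ∀ d ∈ V, 0 ≤ T.sup' hTne (fun i => φ i d) + ⟪v, d⟫ := by
    intro d hd
    set A : ℝ := T.sup' hTne (fun i => φ i d) with hA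
    have step : ∀ t : ℝ, 0 < t →
        (∀ j, φ j v ≠ M → t * (φ j d - A) ≤ M - φ j v) →
        0 ≤ A + ⟪v, d⟫ + t / 2 * ‖d‖ ^ 2 := by
      intro t ht hsmall
      have hwV : v + t • d ∈ V := V.add_mem hvV (V.smul_mem t hd)
      have hmin' : M + (1 / 2) * ‖v‖ ^ 2
          ≤ (⨆ j, φ j (v + t • d)) + (1 / 2) * ‖v + t • d‖ ^ 2 := hmin hwV
      have hsup : (⨆ j, φ j (v + t • d)) ≤ M + t * A := by
        refine ciSup_le fun j => ?_
        rw [hφadd, hφsmul]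
        by_cases hj : φ j v = M
        · have hjT : j ∈ T := by simp [hT, hj]
          have : φ j d ≤ A := hA ▸ Finset.le_sup' (fun i => φ i d) hjT
          nlinarith
        · have := hsmall j hj
          nlinarith
      have hnorm : ‖v + t • d‖ ^ 2 = ‖v‖ ^ 2 + 2 * (t * ⟪v, d⟫) + t ^ 2 * ‖d‖ ^ 2 := by
        rw [norm_add_sq_real, real_inner_smul_right, norm_smul]
        simp [mul_pow, abs_of_pos ht]
      rw [hnorm] at hmin'
      have h3 : 0 ≤ t * (A + ⟪v, d⟫ + t / 2 * ‖d‖ ^ 2) := by nlinarith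
      nlinarith
    by_contra hcon
    push_neg at hcon
    set c : ℝ := -(A + ⟪v, d⟫) with hc
    have hcpos : 0 < c := by simp only [hc]; linarith
    set t₀ : ℝ := univ.inf' univ_nonempty
      (fun j => if φ j v = M then 1 else (M - φ j v) / (|φ j d - A| + 1)) with ht₀
    have ht₀pos : 0 < t₀ := by
      rw [ht₀, Finset.lt_inf'_iff]
      intro j _
      by_cases hj : φ j v = M
      · simp [hj]
      · have h1 : φ j v < M := lt_of_le_of_ne (hle j v) hj
        have h2 : 0 < M - φ j v := by linarith
        simp only [hj, if_false]
        positivity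
    set t : ℝ := min t₀ (c / (‖d‖ ^ 2 + 1)) with htdef
    have htpos : 0 < t := lt_min ht₀pos (by positivity)
    have hsm : ∀ j, φ j v ≠ M → t * (φ j d - A) ≤ M - φ j v := by
      intro j hj
      have hlt : φ j v < M := lt_of_le_of_ne (hle j v) hj
      have ht1 : t ≤ (M - φ j v) / (|φ j d - A| + 1) := by
        refine le_trans (min_le_left _ _) ?_
        refine le_trans (Finset.inf'_le _ (mem_univ j)) ?_
        simp [hj]
      have habs : φ j d - A ≤ |φ j d - A| := le_abs_self _
      have hpos : (0:ℝ) < |φ j d - A| + 1 := by positivity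
      calc t * (φ j d - A) ≤ t * (|φ j d - A| + 1) := by nlinarith
        _ ≤ ((M - φ j v) / (|φ j d - A| + 1)) * (|φ j d - A| + 1) :=
            mul_le_mul_of_nonneg_right ht1 (le_of_lt hpos)
        _ = M - φ j v := by field_simp
    have hstep := step t htpos hsm
    have ht2 : t ≤ c / (‖d‖ ^ 2 + 1) := min_le_right _ _
    have hd1 : (0:ℝ) < ‖d‖ ^ 2 + 1 := by positivity
    have hlt2 : t / 2 * ‖d‖ ^ 2 < c := by
      have h4 : t * (‖d‖ ^ 2 + 1) ≤ c := by
        calc t * (‖d‖ ^ 2 + 1) ≤ (c / (‖d‖ ^ 2 + 1)) * (‖d‖ ^ 2 + 1) :=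
          mul_le_mul_of_nonneg_right ht2 (le_of_lt hd1)
        _ = c := by field_simp
      nlinarith
    have : A + ⟪v, d⟫ = -c := by rw [hc]; ring
    linarith
  -- -v belongs to the convex hull of the projected active gradients
  have claimB : -v ∈ convexHull ℝ (↑(T.image G) : Set E) := by
    by_contra hnot
    have hconv : Convex ℝ (convexHull ℝ (↑(T.image G) : Set E)) := convex_convexHull ℝ _
    have hclosed : IsClosed (convexHull ℝ (↑(T.image G) : Set E)) :=
      ((T.image G).finite_toSet.isCompact_convexHull (𝕜 := ℝ)).isClosed
    obtain ⟨f, u, hfu1, hfu2⟩ := geometric_hahn_banach_point_closed hconv hclosed hnot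
    set d : E := (InnerProductSpace.toDual ℝ E).symm f with hd
    have hdapp : ∀ y : E, ⟪d, y⟫ = f y := fun y =>
      InnerProductSpace.toDual_symm_apply
    set d' : E := -((V.orthogonalProjectionOnto d : E)) with hd'
    have hd'V : d' ∈ V := V.neg_mem (V.orthogonalProjectionOnto d).2
    have h0 := claimA d' hd'V
    obtain ⟨i, hiT, hisup⟩ := Finset.exists_mem_eq_sup' hTne (fun i => φ i d')
    rw [hisup] at h0
    have h1 : φ i d' = -⟪G i, d⟫ := by
      rw [← hproj i d' hd'V, hd', inner_neg_right, hproj2 d (G i) (hGV i)]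
    have h2 : ⟪v, d'⟫ = -⟪v, d⟫ := by
      rw [hd', inner_neg_right, hproj2 d v hvV]
    rw [h1, h2] at h0
    have h3 : ⟪d, G i⟫ ≤ ⟪d, -v⟫ := by
      have ha : ⟪d, G i⟫ = ⟪G i, d⟫ := real_inner_comm _ _
      have hb : ⟪d, -v⟫ = -⟪v, d⟫ := by
        rw [inner_neg_right, real_inner_comm]
      rw [ha, hb]
      linarith
    have h4 : G i ∈ convexHull ℝ (↑(T.image G) : Set E) :=
      subset_convexHull ℝ _ (by
        simp only [Finset.coe_image, Set.mem_image, Finset.mem_coe]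
        exact ⟨i, hiT, rfl⟩)
    have h5 := hfu2 _ h4
    rw [← hdapp (G i)] at h5
    rw [← hdapp (-v)] at hfu1
    linarith
  -- extract the convex combination
  rw [_root_.convexHull_eq] at claimB
  obtain ⟨ι, s, w, z, hw0, hw1, hz, hcm⟩ := claimB
  have hz' : ∀ j ∈ s, ∃ i, i ∈ T ∧ G i = z j := by
    intro j hj
    have hmem := hz j hj
    simp only [Finset.coe_image, Set.mem_image, Finset.mem_coe] at hmem
    obtain ⟨i, hi1, hi2⟩ := hmem
    exact ⟨i, hi1, hi2⟩
  choose! idx hidx1 hidx2 using hz'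
  refine ⟨fun i => ∑ j ∈ s.filter (fun j => idx j = i), w j, ?_, ?_, ?_, ?_⟩
  · intro i
    exact Finset.sum_nonneg fun j hj => hw0 j (Finset.mem_filter.mp hj).1
  · rw [Finset.sum_fiberwise_of_maps_to (fun j _ => mem_univ (idx j))]
    exact hw1
  · intro i hi
    apply Finset.sum_eq_zero
    intro j hj
    obtain ⟨hjt, hji⟩ := Finset.mem_filter.mp hj
    exfalso
    apply hi
    have hmem := hidx1 j hjt
    rw [hji] at hmem
    simpa [hT, hM, hφ] using hmem
  · have hcm' : s.centerMass w z = ∑ j ∈ s, w j • z j :=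
      Finset.centerMass_eq_of_sum_1 _ _ hw1
    have hsum : ∑ i, (∑ j ∈ s.filter (fun j => idx j = i), w j) • G i
        = ∑ j ∈ s, w j • z j := by
      rw [← Finset.sum_fiberwise_of_maps_to (fun j (_ : j ∈ s) => mem_univ (idx j))
        (fun j => w j • z j)]
      refine Finset.sum_congr rfl fun i _ => ?_
      rw [Finset.sum_smul]
      refine Finset.sum_congr rfl fun j hj => ?_
      obtain ⟨hjt, hji⟩ := Finset.mem_filter.mp hj
      rw [← hji, hidx2 j hjt]
    rw [hsum, ← hcm', hcm, neg_neg]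

end Aux

/-- The minimizer of `v ↦ max_i ∇F_i(x)·v + ½‖v‖²` over a linear subspace `V` is
the negative of a convex combination of the projections onto `V` of the gradients
`∇F_i(x)` for indices `i` attaining the max. -/
theorem minimizer_is_neg_convex_comb_of_projected_gradients (n m : ℕ) (hm : 0 < m)
    (F : EuclideanSpace ℝ (Fin n) → EuclideanSpace ℝ (Fin m))
    (hF : ContDiff ℝ 1 F) (x : EuclideanSpace ℝ (Fin n))
    (V : Submodule ℝ (EuclideanSpace ℝ (Fin n)))
    (v : EuclideanSpace ℝ (Fin n)) (hvV : v ∈ V)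
    (hmin : IsMinOn (fun w => (⨆ i, fderiv ℝ F x w i) + (1 / 2) * ‖w‖ ^ 2)
      (V : Set (EuclideanSpace ℝ (Fin n))) v) :
    ∃ lam : Fin m → ℝ, (∀ i, 0 ≤ lam i) ∧ (∑ i, lam i = 1) ∧
      (∀ i, fderiv ℝ F x v i ≠ (⨆ j, fderiv ℝ F x v j) → lam i = 0) ∧
      v = -∑ i, lam i •
        (V.orthogonalProjectionOnto (gradient (fun y => F y i) x) : EuclideanSpace ℝ (Fin n)) := by
  haveI : NeZero m := ⟨hm.ne'⟩
  have hkey : ∀ i (w : EuclideanSpace ℝ (Fin n)),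
      ⟪gradient (fun y => F y i) x, w⟫ = fderiv ℝ F x w i := by
    intro i w
    have hFd : HasFDerivAt F (fderiv ℝ F x) x :=
      (hF.differentiable one_ne_zero x).hasFDerivAt
    have h1 : HasFDerivAt (fun y => F y i)
        ((EuclideanSpace.proj i).comp (fderiv ℝ F x)) x :=
      (EuclideanSpace.proj (𝕜 := ℝ) i).hasFDerivAt.comp x hFd
    rw [aux_inner_gradient, h1.fderiv]
    rfl
  have hmin' : IsMinOn
      (fun w => (⨆ i, ⟪gradient (fun y => F y i) x, w⟫) + (1 / 2) * ‖w‖ ^ 2)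
      (V : Set (EuclideanSpace ℝ (Fin n))) v := by
    have : (fun w : EuclideanSpace ℝ (Fin n) =>
        (⨆ i, ⟪gradient (fun y => F y i) x, w⟫) + (1 / 2) * ‖w‖ ^ 2)
        = fun w => (⨆ i, fderiv ℝ F x w i) + (1 / 2) * ‖w‖ ^ 2 := by
      funext w
      congr 1
      exact congrArg (fun h : Fin m → ℝ => ⨆ i, h i) (funext fun i => hkey i w)
    rw [this]
    exact hmin
  obtain ⟨lam, h1, h2, h3, h4⟩ :=
    aux_minimizer_neg_convex_comb (fun i => gradient (fun y => F y i) x) V v hvV hmin'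
  refine ⟨lam, h1, h2, fun i hi => h3 i ?_, h4⟩
  rw [hkey i v]
  have : (⨆ j, ⟪gradient (fun y => F y j) x, v⟫) = ⨆ j, fderiv ℝ F x v j :=
    congrArg (fun h : Fin m → ℝ => ⨆ i, h i) (funext fun j => hkey j v)
  rw [this]
  exact hi
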